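/- Let k ≥ 1 and let Q : ⊕_{σ∈S_{k+1}^0} ℝ^k → ℝ be any block-invariant function. Define ΔQ(x) := Q(⊕_{σ∈S_{k+1}^0} x_σ) − Q(⊕_{σ∈S_{k+1}^1} x_σ) for x ∈ ℝ^{k+1}. Then ΔQ is an alternating function of (x_0,…,x_k): for every permutation τ of {0,…,k}, ΔQ(x_{τ(0)}, x_{τ(1)}, …, x_{τ(k)}) = sgn(τ) · ΔQ(x_0, …, x_k). -/

import Mathlib

private lemma key_lemma (k : ℕ)
    (Q : ({σ : Equiv.Perm (Fin (k + 1)) // Equiv.Perm.sign σ = 1} → (Fin k → ℝ)) → ℝ)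
    (hQ : ∀ π : Equiv.Perm {σ : Equiv.Perm (Fin (k + 1)) // Equiv.Perm.sign σ = 1},
      ∀ X : {σ : Equiv.Perm (Fin (k + 1)) // Equiv.Perm.sign σ = 1} → (Fin k → ℝ),
      Q (fun σ => X (π σ)) = Q X)
    (g : Equiv.Perm (Fin (k + 1))) (hg : Equiv.Perm.sign g = 1)
    (F : Equiv.Perm (Fin (k + 1)) → (Fin k → ℝ)) :
    Q (fun σ => F (g * σ.1)) = Q (fun σ => F σ.1) := by
  have h : ∀ σ : Equiv.Perm (Fin (k + 1)),
      Equiv.Perm.sign σ = 1 ↔ Equiv.Perm.sign ((Equiv.mulLeft g) σ) = 1 := by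
    intro σ
    simp [Equiv.mulLeft, hg]
  have := hQ (Equiv.Perm.subtypePerm (Equiv.mulLeft g) (fun σ => (h σ).symm)) (fun σ => F σ.1)
  exact this

/-- For any block-invariant function `Q` of the `S_{k+1}^0`-indexed tuples from
`ℝ^k`, the difference `ΔQ(x) := Q(⊕_{σ even} x_σ) − Q(⊕_{σ odd} x_σ)` is an alternating function
of `(x_0,…,x_k)`: for every permutation `τ` of `{0,…,k}` one has
`ΔQ(x∘τ) = sgn(τ)·ΔQ(x)`. -/
theorem block_invariant_difference_alternating (k : ℕ) (hk : 1 ≤ k)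
    (Q : ({σ : Equiv.Perm (Fin (k + 1)) // Equiv.Perm.sign σ = 1} → (Fin k → ℝ)) → ℝ)
    (hQ : ∀ π : Equiv.Perm {σ : Equiv.Perm (Fin (k + 1)) // Equiv.Perm.sign σ = 1},
      ∀ X : {σ : Equiv.Perm (Fin (k + 1)) // Equiv.Perm.sign σ = 1} → (Fin k → ℝ),
      Q (fun σ => X (π σ)) = Q X)
    (x : Fin (k + 1) → ℝ) (τ : Equiv.Perm (Fin (k + 1))) :
    Q (fun σ i => x (τ (σ.1 i.succ)))
      - Q (fun σ i => x (τ (Equiv.swap 0 1 (σ.1 i.succ))))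
    = ((Equiv.Perm.sign τ : ℤ) : ℝ) *
      (Q (fun σ i => x (σ.1 i.succ))
        - Q (fun σ i => x (Equiv.swap 0 1 (σ.1 i.succ)))) := by
  have h01 : (0 : Fin (k + 1)) ≠ 1 := by
    simp [Fin.ext_iff]; omega
  have hswap : Equiv.Perm.sign (Equiv.swap (0 : Fin (k+1)) 1) = -1 :=
    Equiv.Perm.sign_swap h01
  have hss : Equiv.swap (0 : Fin (k+1)) 1 * Equiv.swap 0 1 = 1 := Equiv.swap_mul_self 0 1
  rcases Int.units_eq_one_or (Equiv.Perm.sign τ) with hτ | hτ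
  · -- even case
    have h1 : Q (fun σ i => x (τ (σ.1 i.succ))) = Q (fun σ i => x (σ.1 i.succ)) := by
      have := key_lemma k Q hQ τ hτ (fun ρ => fun i => x (ρ i.succ))
      simpa using this
    have h2 : Q (fun σ i => x (τ (Equiv.swap 0 1 (σ.1 i.succ))))
        = Q (fun σ i => x (Equiv.swap 0 1 (σ.1 i.succ))) := by
      have hg : Equiv.Perm.sign (Equiv.swap (0 : Fin (k+1)) 1 * τ * Equiv.swap 0 1) = 1 := by
        simp [hτ, hswap]
      have := key_lemma k Q hQ _ hg (fun ρ => fun i => x (Equiv.swap 0 1 (ρ i.succ)))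
      convert this using 3 with σ
      funext i
      simp [Equiv.Perm.mul_apply]
    rw [h1, h2, hτ]
    norm_num
  · -- odd case
    have h1 : Q (fun σ i => x (τ (σ.1 i.succ)))
        = Q (fun σ i => x (Equiv.swap 0 1 (σ.1 i.succ))) := by
      have hg : Equiv.Perm.sign (Equiv.swap (0 : Fin (k+1)) 1 * τ) = 1 := by
        simp [hτ, hswap]
      have := key_lemma k Q hQ _ hg (fun ρ => fun i => x (Equiv.swap 0 1 (ρ i.succ)))
      convert this using 3 with σ
      funext i
      simp [Equiv.Perm.mul_apply]
    have h2 : Q (fun σ i => x (τ (Equiv.swap 0 1 (σ.1 i.succ))))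
        = Q (fun σ i => x (σ.1 i.succ)) := by
      have hg : Equiv.Perm.sign (τ * Equiv.swap (0 : Fin (k+1)) 1) = 1 := by
        simp [hτ, hswap]
      have := key_lemma k Q hQ _ hg (fun ρ => fun i => x (ρ i.succ))
      convert this using 3 with σ
      funext i
      simp [Equiv.Perm.mul_apply]
    rw [h1, h2, hτ]
    push_cast
    ring
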